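/- Let A, B ⊆ ℝⁿ be nonempty closed sets with A bounded such that S := A ∩ B is nonempty, and let Z ⊆ ℝᵏ be a nonempty closed set. Then for every d > 0 there exists d̲ > 0 such that every point (x, y) ∈ ℝⁿ × ℝᵏ satisfying dist((x, y), A × Z) ≤ d̲ and dist((x, y), B × Z) ≤ d̲ also satisfies dist((x, y), S × Z) ≤ d. -/

import Mathlib

open Metric

/-- Base intersection-distance lemma in a proper space. -/
lemma intersection_dist_lower_bound_base
    {n : ℕ} (A B : Set (EuclideanSpace ℝ (Fin n)))
    (hAc : IsClosed A) (hBc : IsClosed B)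
    (hAb : Bornology.IsBounded A)
    (hS : (A ∩ B).Nonempty) :
    ∀ d > 0, ∃ dlow > 0, ∀ x : EuclideanSpace ℝ (Fin n),
      Metric.infDist x A ≤ dlow → Metric.infDist x B ≤ dlow →
      Metric.infDist x (A ∩ B) ≤ d := by
  intro d hd
  have hA : A.Nonempty := hS.mono Set.inter_subset_left
  have hB : B.Nonempty := hS.mono Set.inter_subset_right
  -- the compact ambient set
  set K : Set (EuclideanSpace ℝ (Fin n)) := Metric.cthickening 1 A with hK
  have hKcpt : IsCompact K :=
    isCompact_of_isClosed_isBounded isClosed_cthickening (hAb.cthickening)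
  -- the "bad" set
  set C : Set (EuclideanSpace ℝ (Fin n)) :=
    K ∩ {x | d ≤ Metric.infDist x (A ∩ B)} with hC
  have hCcpt : IsCompact C :=
    hKcpt.inter_right (isClosed_le continuous_const (continuous_infDist_pt _))
  set g : EuclideanSpace ℝ (Fin n) → ℝ :=
    fun x => max (Metric.infDist x A) (Metric.infDist x B) with hg
  have hgcont : Continuous g := (continuous_infDist_pt A).max (continuous_infDist_pt B)
  have hgpos : ∀ x ∈ C, 0 < g x := by
    intro x hx
    have hge : 0 ≤ g x := le_max_of_le_left Metric.infDist_nonneg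
    rcases hge.lt_or_eq with h | h
    · exact h
    · exfalso
      have h0 : g x = 0 := h.symm
      have hxA : Metric.infDist x A = 0 :=
        le_antisymm (le_max_left _ _ |>.trans_eq h0) Metric.infDist_nonneg
      have hxB : Metric.infDist x B = 0 :=
        le_antisymm (le_max_right _ _ |>.trans_eq h0) Metric.infDist_nonneg
      have hxS : x ∈ A ∩ B :=
        ⟨(hAc.mem_iff_infDist_zero hA).2 hxA, (hBc.mem_iff_infDist_zero hB).2 hxB⟩
      have h1 : Metric.infDist x (A ∩ B) = 0 := Metric.infDist_zero_of_mem hxS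
      have h2 : d ≤ Metric.infDist x (A ∩ B) := hx.2
      linarith
  by_cases hCne : C.Nonempty
  · -- g attains a positive minimum m on C
    obtain ⟨x₀, hx₀C, hx₀min⟩ := hCcpt.exists_isMinOn hCne hgcont.continuousOn
    set m := g x₀ with hm
    have hmpos : 0 < m := hgpos x₀ hx₀C
    refine ⟨min (m / 2) (1 / 2), by positivity, ?_⟩
    intro x hxA hxB
    by_contra hcon
    push_neg at hcon
    have hxK : x ∈ K := by
      have : Metric.infDist x A < 1 :=
        lt_of_le_of_lt hxA (lt_of_le_of_lt (min_le_right _ _) (by norm_num))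
      obtain ⟨a, haA, hadist⟩ := (Metric.infDist_lt_iff hA).1 this
      exact Metric.mem_cthickening_of_dist_le x a 1 A haA hadist.le
    have hxC : x ∈ C := ⟨hxK, Set.mem_setOf_eq ▸ hcon.le⟩
    have : m ≤ g x := hx₀min hxC
    have hgx : g x ≤ min (m / 2) (1 / 2) := max_le hxA hxB
    have : m ≤ m / 2 := this.trans (hgx.trans (min_le_left _ _))
    linarith
  · -- C is empty: any dlow ≤ 1/2 works
    refine ⟨1 / 2, by norm_num, ?_⟩
    intro x hxA hxB
    by_contra hcon
    push_neg at hcon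
    have hxK : x ∈ K := by
      have : Metric.infDist x A < 1 := lt_of_le_of_lt hxA (by norm_num)
      obtain ⟨a, haA, hadist⟩ := (Metric.infDist_lt_iff hA).1 this
      exact Metric.mem_cthickening_of_dist_le x a 1 A haA hadist.le
    exact hCne ⟨x, hxK, Set.mem_setOf_eq ▸ hcon.le⟩

/-- In a product, the distance of a component to a factor is bounded by
the distance of the point to the product set. -/
lemma infDist_fst_le_infDist_prod
    {α β : Type*} [MetricSpace α] [MetricSpace β]
    (s : Set α) (t : Set β) (p : α × β) (hst : (s ×ˢ t).Nonempty) :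
    Metric.infDist p.1 s ≤ Metric.infDist p (s ×ˢ t) := by
  by_contra h
  push_neg at h
  obtain ⟨q, hq, hqd⟩ := (Metric.infDist_lt_iff hst).1 h
  have h1 : Metric.infDist p.1 s ≤ dist p.1 q.1 :=
    Metric.infDist_le_dist_of_mem hq.1
  have h2 : dist p.1 q.1 ≤ dist p q := by
    rw [Prod.dist_eq]; exact le_max_left _ _
  linarith

lemma infDist_snd_le_infDist_prod
    {α β : Type*} [MetricSpace α] [MetricSpace β]
    (s : Set α) (t : Set β) (p : α × β) (hst : (s ×ˢ t).Nonempty) :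
    Metric.infDist p.2 t ≤ Metric.infDist p (s ×ˢ t) := by
  by_contra h
  push_neg at h
  obtain ⟨q, hq, hqd⟩ := (Metric.infDist_lt_iff hst).1 h
  have h1 : Metric.infDist p.2 t ≤ dist p.2 q.2 :=
    Metric.infDist_le_dist_of_mem hq.2
  have h2 : dist p.2 q.2 ≤ dist p q := by
    rw [Prod.dist_eq]; exact le_max_right _ _
  linarith

lemma infDist_prod_le_max
    {α β : Type*} [MetricSpace α] [MetricSpace β]
    (s : Set α) (t : Set β) (p : α × β) (hs : s.Nonempty) (ht : t.Nonempty) :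
    Metric.infDist p (s ×ˢ t) ≤ max (Metric.infDist p.1 s) (Metric.infDist p.2 t) := by
  refine le_of_forall_pos_le_add fun ε hε => ?_
  obtain ⟨a, ha, hda⟩ := (Metric.infDist_lt_iff hs).1
    (lt_add_of_pos_right (Metric.infDist p.1 s) hε)
  obtain ⟨b, hb, hdb⟩ := (Metric.infDist_lt_iff ht).1
    (lt_add_of_pos_right (Metric.infDist p.2 t) hε)
  calc Metric.infDist p (s ×ˢ t) ≤ dist p (a, b) :=
        Metric.infDist_le_dist_of_mem ⟨ha, hb⟩
    _ = max (dist p.1 a) (dist p.2 b) := Prod.dist_eq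
    _ ≤ max (Metric.infDist p.1 s) (Metric.infDist p.2 t) + ε := by
        apply max_le
        · exact hda.le.trans (add_le_add (le_max_left _ _) le_rfl)
        · exact hdb.le.trans (add_le_add (le_max_right _ _) le_rfl)

/-- Remark 3: extension of the intersection-distance lemma (Lemma 4) to sets
unbounded in the same product dimensions: `A × Z` and `B × Z` share the common
factor `Z`, and closeness to both implies closeness to `(A ∩ B) × Z`. -/
theorem intersection_dist_lower_bound_product
    {n k : ℕ}
    (A B : Set (EuclideanSpace ℝ (Fin n))) (Z : Set (EuclideanSpace ℝ (Fin k)))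
    (hA : A.Nonempty) (hB : B.Nonempty) (hZ : Z.Nonempty)
    (hAc : IsClosed A) (hBc : IsClosed B) (hZc : IsClosed Z)
    (hAb : Bornology.IsBounded A)
    (hS : (A ∩ B).Nonempty) :
    ∀ d > 0, ∃ dlow > 0, ∀ p : EuclideanSpace ℝ (Fin n) × EuclideanSpace ℝ (Fin k),
      Metric.infDist p (A ×ˢ Z) ≤ dlow → Metric.infDist p (B ×ˢ Z) ≤ dlow →
      Metric.infDist p ((A ∩ B) ×ˢ Z) ≤ d := by
  intro d hd
  obtain ⟨dlow, hdlow, hbase⟩ :=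
    intersection_dist_lower_bound_base A B hAc hBc hAb hS d hd
  refine ⟨min dlow d, lt_min hdlow hd, ?_⟩
  intro p hpA hpB
  have hxA : Metric.infDist p.1 A ≤ dlow :=
    le_trans (le_trans (infDist_fst_le_infDist_prod A Z p (hA.prod hZ)) hpA) (min_le_left _ _)
  have hxB : Metric.infDist p.1 B ≤ dlow :=
    le_trans (le_trans (infDist_fst_le_infDist_prod B Z p (hB.prod hZ)) hpB) (min_le_left _ _)
  have hyZ : Metric.infDist p.2 Z ≤ d :=
    le_trans (le_trans (infDist_snd_le_infDist_prod A Z p (hA.prod hZ)) hpA) (min_le_right _ _)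
  have hxS : Metric.infDist p.1 (A ∩ B) ≤ d := hbase p.1 hxA hxB
  calc Metric.infDist p ((A ∩ B) ×ˢ Z)
      ≤ max (Metric.infDist p.1 (A ∩ B)) (Metric.infDist p.2 Z) :=
        infDist_prod_le_max _ _ _ hS hZ
    _ ≤ d := max_le hxS hyZ
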